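/- Let n ≥ 3 and let β ∈ ℝ^{n-1} be such that d_β is a metric or d_{−β} is a metric (i.e., β ∈ B>_n ∪ (−B>_n)). Then for μ, ν ∈ ℝⁿ, d^μ_β = d^ν_β (as functions on S_n × S_n) if and only if μ = ν. -/

import Mathlib

open Finset

noncomputable section

/-- `i >_σ j`: candidate `i` is ranked above candidate `j` by `σ`
(where `σ i` is the candidate in position `i`). -/
def prefOver {n : ℕ} (σ : Equiv.Perm (Fin n)) (i j : Fin n) : Prop :=
  σ.symm i < σ.symm j

/-- `M(S,σ)`: the set of `>_σ`-maximal elements of `S` (a singleton when `S ≠ ∅`). -/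
def bestSet {n : ℕ} (σ : Equiv.Perm (Fin n)) (S : Finset (Fin n)) : Finset (Fin n) :=
  S.filter fun x => ∀ y ∈ S, σ.symm x ≤ σ.symm y

/-- `△_S(σ,π) = M(S,σ) △ M(S,π)`. -/
def topDiff {n : ℕ} (σ π : Equiv.Perm (Fin n)) (S : Finset (Fin n)) : Finset (Fin n) :=
  symmDiff (bestSet σ S) (bestSet π S)

/-- The `(β,μ)`-top-difference distance; `β i` is the weight of menus of size `i+2`. -/
def dTD (n : ℕ) (β : Fin (n - 1) → ℝ) (μ : Fin n → ℝ)
    (σ π : Equiv.Perm (Fin n)) : ℝ :=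
  ∑ S ∈ Finset.univ.filter (fun S : Finset (Fin n) => 2 ≤ S.card),
    (if h : S.card - 2 < n - 1 then β ⟨S.card - 2, h⟩ else 0) *
      ∑ x ∈ topDiff σ π S, μ x

def IsSemimetric {α : Type*} (d : α → α → ℝ) : Prop :=
  (∀ x y, 0 ≤ d x y) ∧ (∀ x y, d x y = d y x) ∧ (∀ x, d x x = 0) ∧
    (∀ x y z, d x z ≤ d x y + d y z)

def IsMetricFn {α : Type*} (d : α → α → ℝ) : Prop :=
  IsSemimetric d ∧ ∀ x y, d x y = 0 → x = y

lemma bestSet_eq_singleton {n : ℕ} (σ : Equiv.Perm (Fin n)) {S : Finset (Fin n)} {x : Fin n}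
    (hx : x ∈ S) (hmin : ∀ y ∈ S, σ.symm x ≤ σ.symm y) : bestSet σ S = {x} := by
  ext z
  simp only [bestSet, Finset.mem_filter, Finset.mem_singleton]
  constructor
  · rintro ⟨hz, hz2⟩
    exact σ.symm.injective (le_antisymm (hz2 x hx) (hmin z hz))
  · rintro rfl; exact ⟨hx, hmin⟩

lemma fin_one_le {n : ℕ} [NeZero n] (hn : 2 ≤ n) {z : Fin n} (hz : z ≠ 0) : (1 : Fin n) ≤ z := by
  rw [Fin.le_def, Fin.val_one', Nat.mod_eq_of_lt (by omega)]
  have hz' : z.val ≠ 0 := fun h => hz (Fin.ext (by rw [h, Fin.val_zero]))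
  omega

lemma topDiff_adj {n : ℕ} [NeZero n] (hn : 2 ≤ n) (σ π : Equiv.Perm (Fin n)) (a b : Fin n) (hab : a ≠ b)
    (ha : σ.symm a = 0) (hb : σ.symm b = 1)
    (hπ : ∀ x, π.symm x = Equiv.swap 0 1 (σ.symm x)) (S : Finset (Fin n)) :
    topDiff σ π S = if a ∈ S ∧ b ∈ S then {a, b} else ∅ := by
  have hπa : π.symm a = 1 := by rw [hπ, ha, Equiv.swap_apply_left]
  have hπb : π.symm b = 0 := by rw [hπ, hb, Equiv.swap_apply_right]
  have hσ0 : ∀ y, y ≠ a → σ.symm y ≠ 0 := by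
    intro y hy h; exact hy (σ.symm.injective (h.trans ha.symm))
  have hσ1 : ∀ y, y ≠ b → σ.symm y ≠ 1 := by
    intro y hy h; exact hy (σ.symm.injective (h.trans hb.symm))
  have hπo : ∀ y, y ≠ a → y ≠ b → π.symm y = σ.symm y := by
    intro y h1 h2
    rw [hπ, Equiv.swap_apply_of_ne_of_ne (hσ0 y h1) (hσ1 y h2)]
  by_cases haS : a ∈ S <;> by_cases hbS : b ∈ S
  · have e1 : bestSet σ S = {a} :=
      bestSet_eq_singleton σ haS (by intro y _; rw [ha]; exact Fin.zero_le _)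
    have e2 : bestSet π S = {b} :=
      bestSet_eq_singleton π hbS (by intro y _; rw [hπb]; exact Fin.zero_le _)
    rw [if_pos ⟨haS, hbS⟩]
    ext z
    simp only [topDiff, e1, e2, Finset.mem_symmDiff, Finset.mem_singleton,
      Finset.mem_insert]
    constructor
    · rintro (⟨rfl, -⟩ | ⟨rfl, -⟩) <;> tauto
    · rintro (rfl | rfl)
      · exact Or.inl ⟨rfl, hab⟩
      · exact Or.inr ⟨rfl, fun h => hab h.symm⟩
  · have e1 : bestSet σ S = {a} :=
      bestSet_eq_singleton σ haS (by intro y _; rw [ha]; exact Fin.zero_le _)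
    have e2 : bestSet π S = {a} := by
      apply bestSet_eq_singleton π haS
      intro y hy
      rcases eq_or_ne y a with rfl | hya
      · exact le_refl _
      · have hyb : y ≠ b := fun h => hbS (h ▸ hy)
        rw [hπa, hπo y hya hyb]
        exact fin_one_le hn (hσ0 y hya)
    rw [if_neg (by tauto)]
    simp [topDiff, e1, e2]
  · have e1 : bestSet σ S = {b} := by
      apply bestSet_eq_singleton σ hbS
      intro y hy
      rcases eq_or_ne y b with rfl | hyb
      · exact le_refl _
      · have hya : y ≠ a := fun h => haS (h ▸ hy)
        rw [hb]
        exact fin_one_le hn (hσ0 y hya)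
    have e2 : bestSet π S = {b} :=
      bestSet_eq_singleton π hbS (by intro y _; rw [hπb]; exact Fin.zero_le _)
    rw [if_neg (by tauto)]
    simp [topDiff, e1, e2]
  · have e : bestSet σ S = bestSet π S := by
      unfold bestSet
      apply Finset.filter_congr
      intro x hx
      have hx' : π.symm x = σ.symm x :=
        hπo x (fun h => haS (h ▸ hx)) (fun h => hbS (h ▸ hx))
      constructor <;> intro h y hy <;>
        have hy' : π.symm y = σ.symm y :=
          hπo y (fun h' => haS (h' ▸ hy)) (fun h' => hbS (h' ▸ hy))
      · rw [hx', hy']; exact h y hy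
      · rw [← hx', ← hy']; exact h y hy
    rw [if_neg (by tauto)]
    simp [topDiff, e]

lemma dTD_swap {n : ℕ} [NeZero n] (hn : 2 ≤ n) (β : Fin (n-1) → ℝ) (μ : Fin n → ℝ)
    (σ π : Equiv.Perm (Fin n)) (a b : Fin n) (hab : a ≠ b)
    (ha : σ.symm a = 0) (hb : σ.symm b = 1)
    (hπ : ∀ x, π.symm x = Equiv.swap 0 1 (σ.symm x)) :
    dTD n β μ σ π = (μ a + μ b) *
      ∑ S ∈ Finset.univ.filter (fun S : Finset (Fin n) => a ∈ S ∧ b ∈ S),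
        (if h : S.card - 2 < n - 1 then β ⟨S.card - 2, h⟩ else 0) := by
  have hsub : ∀ S : Finset (Fin n), a ∈ S → b ∈ S → 2 ≤ S.card := by
    intro S h1 h2
    have hss : ({a, b} : Finset (Fin n)) ⊆ S := by
      intro z hz; simp only [Finset.mem_insert, Finset.mem_singleton] at hz
      rcases hz with rfl | rfl <;> assumption
    calc 2 = ({a, b} : Finset (Fin n)).card := (Finset.card_pair hab).symm
      _ ≤ S.card := Finset.card_le_card hss
  unfold dTD
  rw [Finset.mul_sum, Finset.sum_filter, Finset.sum_filter]
  apply Finset.sum_congr rfl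
  intro S _
  rw [topDiff_adj hn σ π a b hab ha hb hπ S]
  by_cases hP : a ∈ S ∧ b ∈ S
  · rw [if_pos hP, if_pos hP, if_pos (hsub S hP.1 hP.2), Finset.sum_pair hab, mul_comm]
  · rw [if_neg hP, if_neg hP, Finset.sum_empty]
    split <;> simp

theorem stmt2 (n : ℕ) (hn : 3 ≤ n) (β : Fin (n - 1) → ℝ)
    (hβ : IsMetricFn (dTD n β fun _ => (1 : ℝ)) ∨
          IsMetricFn (dTD n (-β) fun _ => (1 : ℝ)))
    (μ ν : Fin n → ℝ) :
    dTD n β μ = dTD n β ν ↔ μ = ν := by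
  constructor
  · intro h
    haveI : NeZero n := ⟨by omega⟩
    have hn2 : 2 ≤ n := by omega
    have h01 : (0 : Fin n) ≠ 1 := by
      intro hq
      have h' : (0 : ℕ) = 1 % n := by
        have := congrArg Fin.val hq
        rwa [Fin.val_one'] at this
      rw [Nat.mod_eq_of_lt (by omega)] at h'
      omega
    have key : ∀ a b : Fin n, a ≠ b → μ a + μ b = ν a + ν b := by
      intro a b hab
      set e1 : Equiv.Perm (Fin n) := Equiv.swap 0 a with he1
      set b' : Fin n := e1 b with hb'
      have hb'0 : b' ≠ 0 := by
        intro hh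
        apply hab
        have : e1 b = e1 a := by
          rw [← hb', hh, he1, Equiv.swap_apply_right]
        exact (e1.injective this).symm
      set σ : Equiv.Perm (Fin n) := (Equiv.swap 1 b').trans e1 with hσdef
      have hσ0 : σ 0 = a := by
        rw [hσdef]
        simp only [Equiv.trans_apply]
        rw [Equiv.swap_apply_of_ne_of_ne h01 (Ne.symm hb'0), he1, Equiv.swap_apply_left]
      have hσ1 : σ 1 = b := by
        rw [hσdef]
        simp only [Equiv.trans_apply]
        rw [Equiv.swap_apply_left, hb', he1, Equiv.swap_apply_self]
      have ha : σ.symm a = 0 := by rw [← hσ0, Equiv.symm_apply_apply]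
      have hb : σ.symm b = 1 := by rw [← hσ1, Equiv.symm_apply_apply]
      set π : Equiv.Perm (Fin n) := (Equiv.swap (0:Fin n) 1).trans σ with hπdef
      have hπ : ∀ x, π.symm x = Equiv.swap 0 1 (σ.symm x) := by
        intro x
        rw [hπdef]
        simp [Equiv.symm_trans_apply]
      have hσπ : σ ≠ π := by
        intro heq
        apply hab
        have : π 0 = b := by
          rw [hπdef]; simp only [Equiv.trans_apply]
          rw [Equiv.swap_apply_left, hσ1]
        rw [← hσ0, heq, this]
      set C : ℝ := ∑ S ∈ Finset.univ.filter (fun S : Finset (Fin n) => a ∈ S ∧ b ∈ S),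
        (if h : S.card - 2 < n - 1 then β ⟨S.card - 2, h⟩ else 0) with hC
      have hCne : C ≠ 0 := by
        rcases hβ with hm | hm
        · intro hC0
          have h1 : dTD n β (fun _ => (1:ℝ)) σ π = (1 + 1) * C :=
            dTD_swap hn2 β _ σ π a b hab ha hb hπ
          exact hσπ (hm.2 σ π (by rw [h1, hC0, mul_zero]))
        · intro hC0
          have h1 : dTD n (-β) (fun _ => (1:ℝ)) σ π = (1 + 1) *
              ∑ S ∈ Finset.univ.filter (fun S : Finset (Fin n) => a ∈ S ∧ b ∈ S),
                (if h : S.card - 2 < n - 1 then (-β) ⟨S.card - 2, h⟩ else 0) :=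
            dTD_swap hn2 (-β) _ σ π a b hab ha hb hπ
          have h2 : (∑ S ∈ Finset.univ.filter (fun S : Finset (Fin n) => a ∈ S ∧ b ∈ S),
              (if h : S.card - 2 < n - 1 then (-β) ⟨S.card - 2, h⟩ else 0)) = -C := by
            rw [hC, ← Finset.sum_neg_distrib]
            apply Finset.sum_congr rfl
            intro S _
            split <;> simp
          exact hσπ (hm.2 σ π (by rw [h1, h2, hC0, neg_zero, mul_zero]))
      have hμ : dTD n β μ σ π = (μ a + μ b) * C :=
        dTD_swap hn2 β μ σ π a b hab ha hb hπ
      have hν : dTD n β ν σ π = (ν a + ν b) * C :=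
        dTD_swap hn2 β ν σ π a b hab ha hb hπ
      have := congrFun (congrFun h σ) π
      rw [hμ, hν] at this
      exact mul_right_cancel₀ hCne this
    funext x
    have hcard : 1 < (Finset.univ.erase x).card := by
      rw [Finset.card_erase_of_mem (Finset.mem_univ x), Finset.card_univ, Fintype.card_fin]
      omega
    obtain ⟨y, hy, z, hz, hyz⟩ := Finset.one_lt_card.mp hcard
    have hxy : x ≠ y := fun h => (Finset.mem_erase.mp hy).1 h.symm
    have hxz : x ≠ z := fun h => (Finset.mem_erase.mp hz).1 h.symm
    have e1 := key x y hxy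
    have e2 := key x z hxz
    have e3 := key y z hyz
    linarith
  · rintro rfl; rfl
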